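/- Let g : ℝ^p → [0,∞) be convex and differentiable, h : ℝ^p → [0,∞) convex, β > 0, f := g + βh, and assume Θ_f ≠ ∅. Fix α > 0 and define x^{(t+1)} := x^{(t)} − α F_t where F_t := ∇g(x^{(t)}) + β H_t with H_t ∈ ∂h(x^{(t)}) (so F_t ∈ ∂f(x^{(t)})). Then for all integers 0 ≤ t₁ < t₂: min_{t₁ ≤ t ≤ t₂} (f(x^{(t)}) − f*) ≤ [dist²(x^{(t₁)}, Θ_f) + (t₂ − t₁)·α²·max_{t₁ ≤ t ≤ t₂} ‖F_t‖₂²] / (2(t₂ − t₁)α). Moreover, if Θ_f ∩ Θ_g ≠ ∅, then β·min_{t₁ ≤ t ≤ t₂}(h(x^{(t)}) − h_g*) ≤ min_{t₁ ≤ t ≤ t₂}(f(x^{(t)}) − f*), so the same right-hand side also bounds β·min_{t₁ ≤ t ≤ t₂}(h(x^{(t)}) − h_g*). -/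

import Mathlib

/-- `z` is a subgradient of `h` at `x`. -/
def IsSubgradientAt {p : ℕ} (h : EuclideanSpace ℝ (Fin p) → ℝ)
    (z x : EuclideanSpace ℝ (Fin p)) : Prop :=
  ∀ y, h x + (inner ℝ z (y - x) : ℝ) ≤ h y

/-- Gradient inequality for a convex differentiable function. -/
lemma convex_grad_ineq {p : ℕ} {g : EuclideanSpace ℝ (Fin p) → ℝ}
    (hg : ConvexOn ℝ Set.univ g) {x Gx : EuclideanSpace ℝ (Fin p)}
    (hx : HasGradientAt g Gx x) (y : EuclideanSpace ℝ (Fin p)) :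
    g x + (inner ℝ Gx (y - x) : ℝ) ≤ g y := by
  have hphi : ConvexOn ℝ Set.univ (g ∘ (AffineMap.lineMap x y : ℝ →ᵃ[ℝ] _)) := by
    have := hg.comp_affineMap (AffineMap.lineMap x y : ℝ →ᵃ[ℝ] _)
    simpa using this
  have h1 : HasDerivAt (fun s : ℝ => (AffineMap.lineMap x y : ℝ →ᵃ[ℝ] _) s) (y - x) 0 := by
    simp only [AffineMap.lineMap_apply]
    simpa using ((hasDerivAt_id (0 : ℝ)).smul_const (y - x)).add_const x
  have hfd := hasGradientAt_iff_hasFDerivAt.mp hx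
  have h2 : HasDerivAt (g ∘ (AffineMap.lineMap x y : ℝ →ᵃ[ℝ] _))
      ((inner ℝ Gx (y - x) : ℝ)) 0 := by
    have h3 : (AffineMap.lineMap x y : ℝ →ᵃ[ℝ] _) (0 : ℝ) = x := by simp
    have := (h3 ▸ hfd).comp_hasDerivAt 0 h1
    simpa [InnerProductSpace.toDual_apply_apply] using this
  have hs := hphi.le_slope_of_hasDerivAt (Set.mem_univ (0:ℝ)) (Set.mem_univ (1:ℝ))
    one_pos h2
  rw [slope_def_field] at hs
  simp only [Function.comp, AffineMap.lineMap_apply_zero, AffineMap.lineMap_apply_one] at hs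
  have : (inner ℝ Gx (y - x) : ℝ) ≤ g y - g x := by simpa using hs
  linarith

/-- general optimality-gap bound for subgradient descent on `f = g + βh`. -/
theorem subgradient_descent_gap_bound
    {p : ℕ} (g h : EuclideanSpace ℝ (Fin p) → ℝ)
    (G : EuclideanSpace ℝ (Fin p) → EuclideanSpace ℝ (Fin p))
    (hg_nonneg : ∀ x, 0 ≤ g x) (hh_nonneg : ∀ x, 0 ≤ h x)
    (hgconv : ConvexOn ℝ Set.univ g) (hhconv : ConvexOn ℝ Set.univ h)
    (hgrad : ∀ x, HasGradientAt g (G x) x)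
    (β : ℝ) (hβ : 0 < β)
    (f : EuclideanSpace ℝ (Fin p) → ℝ) (hf : ∀ x, f x = g x + β * h x)
    (Θf Θg : Set (EuclideanSpace ℝ (Fin p)))
    (hΘf : Θf = {x | ∀ y, f x ≤ f y}) (hΘg : Θg = {x | ∀ y, g x ≤ g y})
    (hΘf_ne : Θf.Nonempty)
    (fstar hgs : ℝ) (hfstar : fstar = sInf (Set.range f)) (hhgs : hgs = sInf (h '' Θg))
    (α : ℝ) (hα : 0 < α)
    (x H : ℕ → EuclideanSpace ℝ (Fin p))
    (hH : ∀ t, IsSubgradientAt h (H t) (x t))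
    (F : ℕ → EuclideanSpace ℝ (Fin p)) (hF : ∀ t, F t = G (x t) + β • H t)
    (hrec : ∀ t, x (t + 1) = x t - α • F t) :
    ∀ t₁ t₂ : ℕ, ∀ hlt : t₁ < t₂,
      ((Finset.Icc t₁ t₂).inf' (Finset.nonempty_Icc.mpr (le_of_lt hlt))
          (fun t => f (x t) - fstar) ≤
        ((Metric.infDist (x t₁) Θf) ^ 2 + ((t₂ : ℝ) - (t₁ : ℝ)) * α ^ 2 *
            ((Finset.Icc t₁ t₂).sup' (Finset.nonempty_Icc.mpr (le_of_lt hlt))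
              fun t => ‖F t‖ ^ 2)) /
          (2 * ((t₂ : ℝ) - (t₁ : ℝ)) * α)) ∧
      ((Θf ∩ Θg).Nonempty →
        (β * ((Finset.Icc t₁ t₂).inf' (Finset.nonempty_Icc.mpr (le_of_lt hlt))
            (fun t => h (x t) - hgs)) ≤
          (Finset.Icc t₁ t₂).inf' (Finset.nonempty_Icc.mpr (le_of_lt hlt))
            (fun t => f (x t) - fstar)) ∧
        β * ((Finset.Icc t₁ t₂).inf' (Finset.nonempty_Icc.mpr (le_of_lt hlt))
            (fun t => h (x t) - hgs)) ≤
          ((Metric.infDist (x t₁) Θf) ^ 2 + ((t₂ : ℝ) - (t₁ : ℝ)) * α ^ 2 *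
              ((Finset.Icc t₁ t₂).sup' (Finset.nonempty_Icc.mpr (le_of_lt hlt))
                fun t => ‖F t‖ ^ 2)) /
            (2 * ((t₂ : ℝ) - (t₁ : ℝ)) * α)) := by
  -- basic facts
  have hf_nonneg : ∀ y, 0 ≤ f y := fun y => by
    rw [hf]; have := hh_nonneg y; have := hg_nonneg y; nlinarith
  have hbdd : BddBelow (Set.range f) := ⟨0, by rintro _ ⟨y, rfl⟩; exact hf_nonneg y⟩
  have hfstar_le : ∀ y, fstar ≤ f y := fun y => by
    rw [hfstar]; exact csInf_le hbdd ⟨y, rfl⟩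
  have hfstar_eq : ∀ z ∈ Θf, f z = fstar := by
    intro z hz
    refine le_antisymm ?_ (hfstar_le z)
    rw [hfstar]
    refine le_csInf ⟨f z, ⟨z, rfl⟩⟩ ?_
    rintro _ ⟨y, rfl⟩
    rw [hΘf] at hz; exact hz y
  -- F t is a subgradient of f at x t
  have hsubf : ∀ t z, f (x t) + (inner ℝ (F t) (z - x t) : ℝ) ≤ f z := by
    intro t z
    have hgi := convex_grad_ineq hgconv (hgrad (x t)) z
    have hhi := hH t z
    have hinner : (inner ℝ (F t) (z - x t) : ℝ) =
        (inner ℝ (G (x t)) (z - x t) : ℝ) + β * (inner ℝ (H t) (z - x t) : ℝ) := by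
      rw [hF]; rw [inner_add_left, real_inner_smul_left]
    rw [hf, hf, hinner]
    nlinarith [mul_le_mul_of_nonneg_left hhi hβ.le]
  intro t₁ t₂ hlt
  have hne := Finset.nonempty_Icc.mpr (le_of_lt hlt)
  set m : ℝ := (Finset.Icc t₁ t₂).inf' hne (fun t => f (x t) - fstar) with hm
  set M : ℝ := (Finset.Icc t₁ t₂).sup' hne (fun t => ‖F t‖ ^ 2) with hMdef
  set D : ℝ := Metric.infDist (x t₁) Θf with hD
  set N : ℝ := (t₂ : ℝ) - (t₁ : ℝ) with hN
  have hN0 : 0 < N := by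
    rw [hN]; have : (t₁ : ℝ) < t₂ := by exact_mod_cast hlt
    linarith
  have hM0 : 0 ≤ M := by
    have h1 : ‖F t₁‖ ^ 2 ≤ (Finset.Icc t₁ t₂).sup' hne (fun t => ‖F t‖ ^ 2) :=
      Finset.le_sup' (fun t => ‖F t‖ ^ 2) (Finset.mem_Icc.mpr ⟨le_refl t₁, hlt.le⟩)
    exact le_trans (sq_nonneg _) h1
  -- per-step inequality
  have hstep : ∀ z ∈ Θf, ∀ t,
      ‖x (t + 1) - z‖ ^ 2 ≤ ‖x t - z‖ ^ 2 - 2 * α * (f (x t) - fstar) + α ^ 2 * ‖F t‖ ^ 2 := by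
    intro z hz t
    have hsub := hsubf t z
    rw [hfstar_eq z hz] at hsub
    have hαne : α ≠ 0 := ne_of_gt hα
    have hinner_flip : (inner ℝ (F t) (z - x t) : ℝ) = - (inner ℝ (x t - z) (α • F t) : ℝ) / α := by
      have hz' : z - x t = -(x t - z) := by abel
      rw [real_inner_smul_right, real_inner_comm (F t), hz', inner_neg_right]
      field_simp
    have hexp : x (t + 1) - z = (x t - z) - α • F t := by
      rw [hrec]; abel
    rw [hexp, norm_sub_sq_real]
    have hnsm : ‖α • F t‖ ^ 2 = α ^ 2 * ‖F t‖ ^ 2 := by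
      rw [norm_smul, Real.norm_eq_abs, abs_of_pos hα, mul_pow]
    rw [hnsm]
    have hip : 2 * α * (f (x t) - fstar) ≤ 2 * (inner ℝ (x t - z) (α • F t) : ℝ) := by
      rw [hinner_flip, neg_div] at hsub
      have h2 : f (x t) - fstar ≤ (inner ℝ (x t - z) (α • F t) : ℝ) / α := by linarith
      have h3 := mul_le_mul_of_nonneg_left h2 (by positivity : (0:ℝ) ≤ 2 * α)
      have h4 : 2 * α * ((inner ℝ (x t - z) (α • F t) : ℝ) / α)
          = 2 * (inner ℝ (x t - z) (α • F t) : ℝ) := by field_simp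
      linarith
    linarith
  -- telescoped inequality
  have hkey : ∀ z ∈ Θf, 2 * α * (N * m) ≤ ‖x t₁ - z‖ ^ 2 + N * α ^ 2 * M := by
    intro z hz
    have htel : ∀ n, t₁ ≤ n → n ≤ t₂ →
        ∑ t ∈ Finset.Ico t₁ n, (2 * α * (f (x t) - fstar) - α ^ 2 * ‖F t‖ ^ 2)
          ≤ ‖x t₁ - z‖ ^ 2 - ‖x n - z‖ ^ 2 := by
      intro n hn1 hn2
      induction n with
      | zero =>
        simp only [Nat.le_zero] at hn1; subst hn1; simp
      | succ k ih =>
        rcases Nat.lt_or_ge t₁ (k+1) with hk | hk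
        · have hk' : t₁ ≤ k := Nat.lt_succ_iff.mp hk
          have hih := ih hk' (le_trans (Nat.le_succ k) hn2)
          rw [Finset.sum_Ico_succ_top hk']
          have hst := hstep z hz k
          linarith
        · have : t₁ = k + 1 := le_antisymm hn1 hk
          subst this; simp
    have htel2 := htel t₂ hlt.le le_rfl
    have hns : 0 ≤ ‖x t₂ - z‖ ^ 2 := sq_nonneg _
    have hcard : ((Finset.Ico t₁ t₂).card : ℝ) = N := by
      rw [Nat.card_Ico, hN]
      push_cast [Nat.cast_sub hlt.le]
      ring
    have hmem : ∀ t ∈ Finset.Ico t₁ t₂, t ∈ Finset.Icc t₁ t₂ := by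
      intro t ht
      rcases Finset.mem_Ico.mp ht with ⟨h1, h2⟩
      exact Finset.mem_Icc.mpr ⟨h1, h2.le⟩
    have hsum_low : ((Finset.Ico t₁ t₂).card : ℝ) * (2 * α * m) ≤
        ∑ t ∈ Finset.Ico t₁ t₂, (2 * α * (f (x t) - fstar)) := by
      have := Finset.card_nsmul_le_sum (Finset.Ico t₁ t₂)
        (fun t => 2 * α * (f (x t) - fstar)) (2 * α * m)
        (fun t ht => by
          have hmt : m ≤ f (x t) - fstar := by
            rw [hm]; exact Finset.inf'_le _ (hmem t ht)
          show 2 * α * m ≤ 2 * α * (f (x t) - fstar)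
          nlinarith)
      simpa [nsmul_eq_mul] using this
    have hsum_up : ∑ t ∈ Finset.Ico t₁ t₂, (α ^ 2 * ‖F t‖ ^ 2) ≤
        ((Finset.Ico t₁ t₂).card : ℝ) * (α ^ 2 * M) := by
      have := Finset.sum_le_card_nsmul (Finset.Ico t₁ t₂)
        (fun t => α ^ 2 * ‖F t‖ ^ 2) (α ^ 2 * M)
        (fun t ht => by
          have hMt : ‖F t‖ ^ 2 ≤ M := by
            rw [hMdef]; exact Finset.le_sup' (fun t => ‖F t‖ ^ 2) (hmem t ht)
          show α ^ 2 * ‖F t‖ ^ 2 ≤ α ^ 2 * M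
          nlinarith)
      simpa [nsmul_eq_mul] using this
    rw [Finset.sum_sub_distrib] at htel2
    rw [hcard] at hsum_low hsum_up
    nlinarith
  -- the main bound against a fixed minimizer, then infimum over Θf
  have hden : 0 < 2 * N * α := by positivity
  have hmain : m ≤ (D ^ 2 + N * α ^ 2 * M) / (2 * N * α) := by
    rw [le_div_iff₀ hden]
    have hAz : ∀ z ∈ Θf, m * (2 * N * α) - N * α ^ 2 * M ≤ dist (x t₁) z ^ 2 := by
      intro z hz
      have := hkey z hz
      rw [dist_eq_norm]
      nlinarith
    have hAD : m * (2 * N * α) - N * α ^ 2 * M ≤ D ^ 2 := by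
      by_cases hA : m * (2 * N * α) - N * α ^ 2 * M ≤ 0
      · exact le_trans hA (sq_nonneg D)
      · push_neg at hA
        have hsqle : Real.sqrt (m * (2 * N * α) - N * α ^ 2 * M) ≤ D := by
          rw [hD, Metric.infDist_eq_iInf]
          haveI := hΘf_ne.to_subtype
          apply le_ciInf
          rintro ⟨z, hz⟩
          calc Real.sqrt (m * (2 * N * α) - N * α ^ 2 * M)
              ≤ Real.sqrt (dist (x t₁) z ^ 2) := Real.sqrt_le_sqrt (hAz z hz)
            _ = dist (x t₁) z := Real.sqrt_sq dist_nonneg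
        calc m * (2 * N * α) - N * α ^ 2 * M
            = Real.sqrt (m * (2 * N * α) - N * α ^ 2 * M) ^ 2 :=
              (Real.sq_sqrt hA.le).symm
          _ ≤ D ^ 2 := by
              apply pow_le_pow_left₀ (Real.sqrt_nonneg _) hsqle
    linarith
  refine ⟨hmain, ?_⟩
  -- second part
  intro hinter
  obtain ⟨z, hzf, hzg⟩ := hinter
  have hgz : ∀ y, g z ≤ g y := by rw [hΘg] at hzg; exact hzg
  have hfz : f z = fstar := hfstar_eq z hzf
  have hhz_le : h z ≤ hgs := by
    rw [hhgs]
    refine le_csInf ⟨h z, z, hzg, rfl⟩ ?_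
    rintro _ ⟨y, hy, rfl⟩
    -- z minimizes f, g z = g y (both minimize g), so h z ≤ h y
    have hgy : ∀ w, g y ≤ g w := by rw [hΘg] at hy; exact hy
    have hfz_le : f z ≤ f y := by rw [hΘf] at hzf; exact hzf y
    rw [hf, hf] at hfz_le
    have h1 : g y ≤ g z := hgy z
    have h2 : g z ≤ g y := hgz y
    have h3 : β * h z ≤ β * h y := by linarith
    exact le_of_mul_le_mul_left (by linarith) hβ
  have hpt : ∀ t, β * (h (x t) - hgs) ≤ f (x t) - fstar := by
    intro t
    have h1 : g z ≤ g (x t) := hgz (x t)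
    have h2 : f (x t) - fstar = (g (x t) - g z) + β * (h (x t) - h z) := by
      rw [← hfz, hf, hf]; ring
    have h3 : β * (h (x t) - hgs) ≤ β * (h (x t) - h z) :=
      mul_le_mul_of_nonneg_left (by linarith) hβ.le
    linarith
  have hineq : β * ((Finset.Icc t₁ t₂).inf' hne (fun t => h (x t) - hgs)) ≤ m := by
    obtain ⟨t0, ht0mem, ht0⟩ := Finset.exists_mem_eq_inf' hne (fun t => f (x t) - fstar)
    rw [hm, ht0]
    calc β * ((Finset.Icc t₁ t₂).inf' hne (fun t => h (x t) - hgs))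
        ≤ β * (h (x t0) - hgs) :=
          mul_le_mul_of_nonneg_left (Finset.inf'_le _ ht0mem) hβ.le
      _ ≤ f (x t0) - fstar := hpt t0
  exact ⟨hineq, le_trans hineq hmain⟩
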